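/- Quantum Neyman–Pearson inequality: let ρ be a density operator and σ a positive semidefinite operator on a finite-dimensional Hilbert space, let a be real, and let S = {ρ − e^{a}σ > 0} be the spectral projection onto the positive part of ρ − e^{a}σ. Then for every test T with 0 ≤ T ≤ I, α(S) + e^{a} β(S) ≤ α(T) + e^{a} β(T), where α(X) = 1 − Tr(ρ X) and β(X) = Tr(σ X). -/

import Mathlib

open scoped ComplexOrder

/-- The spectral projection of a matrix onto the direct sum of its eigenspaces
corresponding to strictly positive eigenvalues (defined to be `0` if the matrix
is not Hermitian). -/
noncomputable def posProj {m : Type*} [Fintype m] [DecidableEq m]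
    (A : Matrix m m ℂ) : Matrix m m ℂ :=
  if hA : A.IsHermitian then
    (hA.eigenvectorUnitary : Matrix m m ℂ) *
      Matrix.diagonal (fun i => if 0 < hA.eigenvalues i then (1 : ℂ) else 0) *
      star (hA.eigenvectorUnitary : Matrix m m ℂ)
  else 0

lemma psd_diag_re_nonneg {m : Type*} [Fintype m] [DecidableEq m]
    {M : Matrix m m ℂ} (hM : M.PosSemidef) (i : m) : 0 ≤ (M i i).re := by
  have := hM.dotProduct_mulVec_nonneg (Pi.single i 1)
  simp [dotProduct, Matrix.mulVec, Pi.single_apply] at this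
  exact (Complex.nonneg_iff.mp this).1

/-- Quantum Neyman–Pearson inequality for the likelihood test `S = {ρ − e^a σ > 0}`. -/
theorem quantum_neyman_pearson {m : Type*} [Fintype m] [DecidableEq m]
    (ρ σ : Matrix m m ℂ) (hρ : ρ.PosSemidef) (hρ1 : ρ.trace = 1)
    (hσ : σ.PosSemidef) (a : ℝ)
    (T : Matrix m m ℂ) (hT : T.PosSemidef) (hT' : (1 - T).PosSemidef) :
    (1 - (ρ * posProj (ρ - (Real.exp a : ℂ) • σ)).trace.re) +
        Real.exp a * (σ * posProj (ρ - (Real.exp a : ℂ) • σ)).trace.re ≤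
      (1 - (ρ * T).trace.re) + Real.exp a * (σ * T).trace.re := by
  set A : Matrix m m ℂ := ρ - (Real.exp a : ℂ) • σ with hAdef
  have hc : IsSelfAdjoint ((Real.exp a : ℂ)) := by
    rw [isSelfAdjoint_iff, Complex.star_def, Complex.conj_ofReal]
  have hA : A.IsHermitian := hρ.1.sub (hc.smul hσ.1.isSelfAdjoint)
  set U : Matrix m m ℂ := (hA.eigenvectorUnitary : Matrix m m ℂ) with hUdef
  have hU1 : star U * U = 1 := Unitary.coe_star_mul_self hA.eigenvectorUnitary
  have hU2 : U * star U = 1 := Unitary.coe_mul_star_self hA.eigenvectorUnitary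
  set d := hA.eigenvalues with hddef
  have hS : posProj A = U * Matrix.diagonal (fun i => if 0 < d i then (1:ℂ) else 0) * star U := by
    rw [posProj, dif_pos hA]
  have key : ∀ X : Matrix m m ℂ,
      (A * X).trace.re = ∑ i, d i * ((star U * X * U) i i).re := by
    intro X
    have h1 : (A * X).trace
        = (Matrix.diagonal (RCLike.ofReal ∘ d) * (star U * X * U)).trace := by
      conv_lhs => rw [hA.spectral_theorem, Unitary.conjStarAlgAut_apply]
      rw [← hUdef, show (U * Matrix.diagonal (RCLike.ofReal ∘ d) * star U) * X
          = U * (Matrix.diagonal (RCLike.ofReal ∘ d) * (star U * X)) from by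
        simp [mul_assoc], Matrix.trace_mul_comm, mul_assoc]
    rw [h1]
    simp [Matrix.trace, Matrix.diag, Matrix.diagonal_mul, Complex.re_ofReal_mul]
  -- trace of A * S
  have hSval : (A * posProj A).trace.re = ∑ i, (if 0 < d i then d i else 0) := by
    rw [key]
    have h2 : star U * posProj A * U
        = Matrix.diagonal (fun i => if 0 < d i then (1:ℂ) else 0) := by
      rw [hS]
      calc star U * (U * Matrix.diagonal (fun i => if 0 < d i then (1:ℂ) else 0) * star U) * U
          = (star U * U) * Matrix.diagonal (fun i => if 0 < d i then (1:ℂ) else 0)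
            * (star U * U) := by noncomm_ring
        _ = _ := by rw [hU1]; simp
    rw [h2]
    refine Finset.sum_congr rfl fun i _ => ?_
    by_cases h : 0 < d i <;> simp [Matrix.diagonal_apply_eq, h]
  -- bounds on diagonal entries of star U * T * U
  have hpsd : (star U * T * U).PosSemidef := by
    exact hT.conjTranspose_mul_mul_same U
  have hpsd' : (star U * (1 - T) * U).PosSemidef := by
    exact hT'.conjTranspose_mul_mul_same U
  have hid : star U * (1 - T) * U = 1 - star U * T * U := by
    rw [Matrix.mul_sub, Matrix.sub_mul, mul_one, hU1]
  have htlb : ∀ i, 0 ≤ ((star U * T * U) i i).re := psd_diag_re_nonneg hpsd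
  have htub : ∀ i, ((star U * T * U) i i).re ≤ 1 := by
    intro i
    have := psd_diag_re_nonneg hpsd' i
    rw [hid] at this
    have h1 : ((1 - star U * T * U : Matrix m m ℂ) i i).re
        = 1 - ((star U * T * U) i i).re := by
      simp [Matrix.sub_apply, Matrix.one_apply_eq]
    rw [h1] at this
    linarith
  -- main inequality : Tr(A T) ≤ Tr(A S)
  have main : (A * T).trace.re ≤ (A * posProj A).trace.re := by
    rw [key, hSval]
    refine Finset.sum_le_sum fun i _ => ?_
    by_cases h : 0 < d i
    · simp only [if_pos h]
      calc d i * ((star U * T * U) i i).re ≤ d i * 1 :=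
            mul_le_mul_of_nonneg_left (htub i) h.le
        _ = d i := mul_one _
    · simp only [if_neg h]
      push_neg at h
      exact mul_nonpos_of_nonpos_of_nonneg h (htlb i)
  -- expand A
  have expand : ∀ X : Matrix m m ℂ,
      (A * X).trace.re = (ρ * X).trace.re - Real.exp a * (σ * X).trace.re := by
    intro X
    rw [hAdef, Matrix.sub_mul, Matrix.trace_sub, Matrix.smul_mul, Matrix.trace_smul,
      smul_eq_mul, Complex.sub_re, Complex.re_ofReal_mul]
  have e1 := expand (posProj A)
  have e2 := expand T
  linarith
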